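/- Suppose σ, τ, ρ : ℤ³ → ℂ satisfy the bilinear system (S1)–(S3) with constants a_{ij}, b_{ij}, that σ, τ and ρ vanish nowhere on ℤ³, and that a_{ij} ≠ 0 for all i ≠ j. Set Γ₁ = a₂₃b₂₃, Γ₂ = a₃₁b₃₁, Γ₃ = a₁₂b₁₂, define u(m) = σ(ν(m))/τ(ν(m)) for m ∈ Λ⁺, and set G₁=(1,2), G₂=(−2,−1), G₃=(1,−1) in ℤ² (the vectors Gᵢ = e_{i+1} − e_{i−1}). Then for every m ∈ Λ⁺ all six differences u(m) − u(m ± Gᵢ) (i=1,2,3) are nonzero and ∑_{i=1}^{3} Γᵢ·[1/(u(m)−u(m+Gᵢ)) + 1/(u(m)−u(m−Gᵢ))] = 0, i.e. u solves the triangular-lattice field equations on the sublattice Λ⁺. -/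

import Mathlib

/-- The standard basis vectors of `ℤ³`. -/
def δZ (i : Fin 3) : Fin 3 → ℤ := fun j => if j = i then 1 else 0

/-- `N(m) = ⌊(m₁ + m₂ + 2)/3⌋`. -/
def NHL (m : ℤ × ℤ) : ℤ := (m.1 + m.2 + 2) / 3

/-- `ν(m) = (m₁ − N(m), m₂ − N(m), −N(m)) ∈ ℤ³`. -/
def νHL (m : ℤ × ℤ) : Fin 3 → ℤ := ![m.1 - NHL m, m.2 - NHL m, -NHL m]

/-- The triangular-lattice vectors `Gᵢ = e_{i+1} − e_{i−1}` in `ℤ²`. -/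
def GTL : Fin 3 → ℤ × ℤ := ![(1, 2), (-2, -1), (1, -1)]

private theorem keyD (σ τ ρ : (Fin 3 → ℤ) → ℂ) (a b : Fin 3 → Fin 3 → ℂ)
    (ha : ∀ i j, a i j = - a j i)
    (hS1 : ∀ (ν : Fin 3 → ℤ) (i j : Fin 3), i ≠ j →
      σ (ν + δZ i) * τ (ν + δZ j) - τ (ν + δZ i) * σ (ν + δZ j)
        = a i j * τ ν * σ (ν + δZ i + δZ j))
    (hS3 : ∀ (ν : Fin 3 → ℤ) (i j : Fin 3), i ≠ j →
      τ ν * τ (ν + δZ i + δZ j) + ρ ν * σ (ν + δZ i + δZ j)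
        = b i j * τ (ν + δZ i) * τ (ν + δZ j))
    (hσ : ∀ ν, σ ν ≠ 0) (hτ : ∀ ν, τ ν ≠ 0)
    (hane : ∀ i j : Fin 3, i ≠ j → a i j ≠ 0)
    (ν : Fin 3 → ℤ) (s t : Fin 3) (hst : s ≠ t) :
    (σ ν / τ ν - σ (ν + δZ s - δZ t) / τ (ν + δZ s - δZ t) ≠ 0) ∧
    a s t * b s t * (σ ν / τ ν - σ (ν + δZ s - δZ t) / τ (ν + δZ s - δZ t))⁻¹
      = -(τ (ν + δZ s) / σ (ν + δZ s) + ρ (ν - δZ t) / τ (ν - δZ t)) := by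
  have e1 : ν - δZ t + δZ t = ν := by funext j; simp
  have e2 : ν - δZ t + δZ s = ν + δZ s - δZ t := by funext j; simp only [Pi.add_apply, Pi.sub_apply]; ring
  have e3 : ν - δZ t + δZ t + δZ s = ν + δZ s := by funext j; simp only [Pi.add_apply, Pi.sub_apply]; ring
  have e4 : ν - δZ t + δZ s + δZ t = ν + δZ s := by funext j; simp only [Pi.add_apply, Pi.sub_apply]; ring
  have h1 := hS1 (ν - δZ t) t s hst.symm
  rw [e1, e2] at h1
  have h3 := hS3 (ν - δZ t) s t hst
  rw [e4, e2, e1] at h3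
  have hd : σ ν / τ ν - σ (ν + δZ s - δZ t) / τ (ν + δZ s - δZ t)
      = a t s * τ (ν - δZ t) * σ (ν + δZ s) / (τ ν * τ (ν + δZ s - δZ t)) := by
    rw [div_sub_div _ _ (hτ _) (hτ _), h1]
  have hats := hane t s hst.symm
  have hne : σ ν / τ ν - σ (ν + δZ s - δZ t) / τ (ν + δZ s - δZ t) ≠ 0 := by
    rw [hd]
    exact div_ne_zero (mul_ne_zero (mul_ne_zero hats (hτ _)) (hσ _))
      (mul_ne_zero (hτ _) (hτ _))
  refine ⟨hne, ?_⟩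
  rw [hd, ha s t, inv_div]
  have n1 := hτ (ν - δZ t)
  have n2 := hσ (ν + δZ s)
  have n3 := hτ ν
  have n4 := hτ (ν + δZ s - δZ t)
  field_simp
  linear_combination h3

set_option maxHeartbeats 1000000 in
theorem stmt1 (σ τ ρ : (Fin 3 → ℤ) → ℂ) (a b : Fin 3 → Fin 3 → ℂ)
    (ha : ∀ i j, a i j = - a j i) (hb : ∀ i j, b i j = b j i)
    (hS1 : ∀ (ν : Fin 3 → ℤ) (i j : Fin 3), i ≠ j →
      σ (ν + δZ i) * τ (ν + δZ j) - τ (ν + δZ i) * σ (ν + δZ j)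
        = a i j * τ ν * σ (ν + δZ i + δZ j))
    (hS2 : ∀ (ν : Fin 3 → ℤ) (i j : Fin 3), i ≠ j →
      τ (ν + δZ i) * ρ (ν + δZ j) - ρ (ν + δZ i) * τ (ν + δZ j)
        = a i j * ρ ν * τ (ν + δZ i + δZ j))
    (hS3 : ∀ (ν : Fin 3 → ℤ) (i j : Fin 3), i ≠ j →
      τ ν * τ (ν + δZ i + δZ j) + ρ ν * σ (ν + δZ i + δZ j)
        = b i j * τ (ν + δZ i) * τ (ν + δZ j))
    (hσ : ∀ ν, σ ν ≠ 0) (hτ : ∀ ν, τ ν ≠ 0) (hρ : ∀ ν, ρ ν ≠ 0)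
    (hane : ∀ i j : Fin 3, i ≠ j → a i j ≠ 0)
    (Γ : Fin 3 → ℂ) (hΓ : ∀ i : Fin 3, Γ i = a (i + 1) (i + 2) * b (i + 1) (i + 2))
    (u : ℤ × ℤ → ℂ)
    (hup : ∀ m : ℤ × ℤ, (m.1 + m.2) % 3 = 0 → u m = σ (νHL m) / τ (νHL m)) :
    ∀ m : ℤ × ℤ, (m.1 + m.2) % 3 = 0 →
      (∀ i : Fin 3, u m - u (m + GTL i) ≠ 0 ∧ u m - u (m - GTL i) ≠ 0) ∧
      ∑ i : Fin 3,
        Γ i * (1 / (u m - u (m + GTL i)) + 1 / (u m - u (m - GTL i))) = 0 := by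
  intro m hm
  -- mod-3 conditions for the six neighbours
  have c0p : ((m + GTL 0).1 + (m + GTL 0).2) % 3 = 0 := by simp [GTL]; omega
  have c0m : ((m - GTL 0).1 + (m - GTL 0).2) % 3 = 0 := by simp [GTL]; omega
  have c1p : ((m + GTL 1).1 + (m + GTL 1).2) % 3 = 0 := by simp [GTL]; omega
  have c1m : ((m - GTL 1).1 + (m - GTL 1).2) % 3 = 0 := by simp [GTL]; omega
  have c2p : ((m + GTL 2).1 + (m + GTL 2).2) % 3 = 0 := by simp [GTL]; omega
  have c2m : ((m - GTL 2).1 + (m - GTL 2).2) % 3 = 0 := by simp [GTL]; omega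
  -- the ν-shifts of the six neighbours
  have hν0p : νHL (m + GTL 0) = νHL m + δZ 1 - δZ 2 := by
    funext j; fin_cases j <;>
      simp only [Pi.add_apply, Pi.sub_apply, νHL, NHL, δZ, GTL, Prod.fst_add, Prod.snd_add] <;>
      simp <;> omega
  have hν0m : νHL (m - GTL 0) = νHL m + δZ 2 - δZ 1 := by
    funext j; fin_cases j <;>
      simp only [Pi.add_apply, Pi.sub_apply, νHL, NHL, δZ, GTL, Prod.fst_sub, Prod.snd_sub] <;>
      simp <;> omega
  have hν1p : νHL (m + GTL 1) = νHL m + δZ 2 - δZ 0 := by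
    funext j; fin_cases j <;>
      simp only [Pi.add_apply, Pi.sub_apply, νHL, NHL, δZ, GTL, Prod.fst_add, Prod.snd_add] <;>
      simp <;> omega
  have hν1m : νHL (m - GTL 1) = νHL m + δZ 0 - δZ 2 := by
    funext j; fin_cases j <;>
      simp only [Pi.add_apply, Pi.sub_apply, νHL, NHL, δZ, GTL, Prod.fst_sub, Prod.snd_sub] <;>
      simp <;> omega
  have hν2p : νHL (m + GTL 2) = νHL m + δZ 0 - δZ 1 := by
    funext j; fin_cases j <;>
      simp only [Pi.add_apply, Pi.sub_apply, νHL, NHL, δZ, GTL, Prod.fst_add, Prod.snd_add] <;>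
      simp <;> omega
  have hν2m : νHL (m - GTL 2) = νHL m + δZ 1 - δZ 0 := by
    funext j; fin_cases j <;>
      simp only [Pi.add_apply, Pi.sub_apply, νHL, NHL, δZ, GTL, Prod.fst_sub, Prod.snd_sub] <;>
      simp <;> omega
  -- values of u at the neighbours
  have hu : u m = σ (νHL m) / τ (νHL m) := hup m hm
  have hu0p : u (m + GTL 0) = σ (νHL m + δZ 1 - δZ 2) / τ (νHL m + δZ 1 - δZ 2) := by
    rw [hup _ c0p, hν0p]
  have hu0m : u (m - GTL 0) = σ (νHL m + δZ 2 - δZ 1) / τ (νHL m + δZ 2 - δZ 1) := by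
    rw [hup _ c0m, hν0m]
  have hu1p : u (m + GTL 1) = σ (νHL m + δZ 2 - δZ 0) / τ (νHL m + δZ 2 - δZ 0) := by
    rw [hup _ c1p, hν1p]
  have hu1m : u (m - GTL 1) = σ (νHL m + δZ 0 - δZ 2) / τ (νHL m + δZ 0 - δZ 2) := by
    rw [hup _ c1m, hν1m]
  have hu2p : u (m + GTL 2) = σ (νHL m + δZ 0 - δZ 1) / τ (νHL m + δZ 0 - δZ 1) := by
    rw [hup _ c2p, hν2p]
  have hu2m : u (m - GTL 2) = σ (νHL m + δZ 1 - δZ 0) / τ (νHL m + δZ 1 - δZ 0) := by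
    rw [hup _ c2m, hν2m]
  -- the six key identities
  have K12 := keyD σ τ ρ a b ha hS1 hS3 hσ hτ hane (νHL m) 1 2 (by decide)
  have K21 := keyD σ τ ρ a b ha hS1 hS3 hσ hτ hane (νHL m) 2 1 (by decide)
  have K20 := keyD σ τ ρ a b ha hS1 hS3 hσ hτ hane (νHL m) 2 0 (by decide)
  have K02 := keyD σ τ ρ a b ha hS1 hS3 hσ hτ hane (νHL m) 0 2 (by decide)
  have K01 := keyD σ τ ρ a b ha hS1 hS3 hσ hτ hane (νHL m) 0 1 (by decide)
  have K10 := keyD σ τ ρ a b ha hS1 hS3 hσ hτ hane (νHL m) 1 0 (by decide)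
  have A0p : u m - u (m + GTL 0) ≠ 0 := by rw [hu, hu0p]; exact K12.1
  have A0m : u m - u (m - GTL 0) ≠ 0 := by rw [hu, hu0m]; exact K21.1
  have A1p : u m - u (m + GTL 1) ≠ 0 := by rw [hu, hu1p]; exact K20.1
  have A1m : u m - u (m - GTL 1) ≠ 0 := by rw [hu, hu1m]; exact K02.1
  have A2p : u m - u (m + GTL 2) ≠ 0 := by rw [hu, hu2p]; exact K01.1
  have A2m : u m - u (m - GTL 2) ≠ 0 := by rw [hu, hu2m]; exact K10.1
  constructor
  · intro i
    fin_cases i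
    · exact ⟨A0p, A0m⟩
    · exact ⟨A1p, A1m⟩
    · exact ⟨A2p, A2m⟩
  · have hΓ0 : Γ 0 = a 1 2 * b 1 2 := by rw [hΓ 0, show ((0:Fin 3)+1)=1 by decide, show ((0:Fin 3)+2)=2 by decide]
    have hΓ1 : Γ 1 = a 2 0 * b 2 0 := by rw [hΓ 1, show ((1:Fin 3)+1)=2 by decide, show ((1:Fin 3)+2)=0 by decide]
    have hΓ2 : Γ 2 = a 0 1 * b 0 1 := by rw [hΓ 2, show ((2:Fin 3)+1)=0 by decide, show ((2:Fin 3)+2)=1 by decide]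
    have E12 := K12.2
    have E21 := K21.2
    have E20 := K20.2
    have E02 := K02.2
    have E01 := K01.2
    have E10 := K10.2
    rw [ha 2 1, hb 2 1] at E21
    rw [ha 0 2, hb 0 2] at E02
    rw [ha 1 0, hb 1 0] at E10
    rw [Fin.sum_univ_three, hΓ0, hΓ1, hΓ2, hu, hu0p, hu0m, hu1p, hu1m, hu2p, hu2m]
    simp only [one_div]
    linear_combination E12 - E21 + E20 - E02 + E01 - E10
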